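/- For all n ≥ 1, the colon ideal (I_n : x₃^q) is contained in I_{n-1}, where I_n = Σ_{a₁+2a₂=n} J₁^{a₁}J₂^{a₂} in k[x₂,x₃]. -/

import Mathlib

noncomputable section
open MvPolynomial Pointwise

variable {k : Type*} [Field k]

/-- `J₁ = (x₂², x₂x₃^q, x₃^{q+1})` in `T' = k[x₂,x₃]` (variables `X 0 = x₂`, `X 1 = x₃`). -/
def J1 (k : Type*) [Field k] (q : ℕ) : Ideal (MvPolynomial (Fin 2) k) :=
  Ideal.span {X 0 ^ 2, X 0 * X 1 ^ q, X 1 ^ (q + 1)}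

/-- `J₂ = (x₃^{2q+1})`. -/
def J2 (k : Type*) [Field k] (q : ℕ) : Ideal (MvPolynomial (Fin 2) k) :=
  Ideal.span {X 1 ^ (2 * q + 1)}

/-- `Iₙ = Σ_{a₁+2a₂=n} J₁^{a₁} J₂^{a₂}` (so `I₀ = T'`). -/
def filtI (k : Type*) [Field k] (q n : ℕ) : Ideal (MvPolynomial (Fin 2) k) :=
  ⨆ (a : ℕ × ℕ) (_ : a.1 + 2 * a.2 = n), J1 k q ^ a.1 * J2 k q ^ a.2

/-! ### Auxiliary machinery -/

/-- exponent vector `(s, t)` as a `Fin 2 →₀ ℕ`. -/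
def ev (s t : ℕ) : Fin 2 →₀ ℕ := Finsupp.single 0 s + Finsupp.single 1 t

lemma ev_apply0 (s t : ℕ) : ev s t 0 = s := by
  simp [ev, Finsupp.single_apply]

lemma ev_apply1 (s t : ℕ) : ev s t 1 = t := by
  simp [ev, Finsupp.single_apply]

lemma ev_add (s t s' t' : ℕ) : ev s t + ev s' t' = ev (s + s') (t + t') := by
  simp only [ev, Finsupp.single_add]
  abel

lemma monomial_ev (s t : ℕ) : (monomial (ev s t) (1 : k)) = X 0 ^ s * X 1 ^ t := by
  rw [X_pow_eq_monomial, X_pow_eq_monomial, monomial_mul, one_mul, ev]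

/-- the generating exponents of `Iₙ`. -/
def Sgen (q n : ℕ) : Set (Fin 2 →₀ ℕ) :=
  {e | ∃ c1 c2 c3 b : ℕ, c1 + c2 + c3 + 2 * b = n ∧
      e = ev (2 * c1 + c2) (q * c2 + (q + 1) * c3 + (2 * q + 1) * b)}

/-- the monomial ideal with exponents `Sgen q n`. -/
def Mn (k : Type*) [Field k] (q n : ℕ) : Ideal (MvPolynomial (Fin 2) k) :=
  Ideal.span ((fun e => monomial e (1 : k)) '' Sgen q n)

lemma Mn_def (q n : ℕ) :
    Mn k q n = Ideal.span ((fun e => monomial e (1 : k)) '' Sgen q n) := rfl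

/-- the generating exponents of `J₁^a`. -/
def Pset (q a : ℕ) : Set (Fin 2 →₀ ℕ) :=
  {e | ∃ c1 c2 c3 : ℕ, c1 + c2 + c3 = a ∧
      e = ev (2 * c1 + c2) (q * c2 + (q + 1) * c3)}

lemma span_img_mul_span_img (A B : Set (Fin 2 →₀ ℕ)) :
    Ideal.span ((fun e => monomial e (1 : k)) '' A) *
        Ideal.span ((fun e => monomial e (1 : k)) '' B) ≤
      Ideal.span ((fun e => monomial e (1 : k)) '' (A + B)) := by
  rw [Ideal.mul_le]
  intro r hr s hs
  rw [mem_ideal_span_monomial_image] at hr hs ⊢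
  intro xi hxi
  obtain ⟨e1, he1, e2, he2, rfl⟩ := Finset.mem_add.1 (support_mul r s hxi)
  obtain ⟨g1, hg1, h1⟩ := hr e1 he1
  obtain ⟨g2, hg2, h2⟩ := hs e2 he2
  exact ⟨g1 + g2, Set.add_mem_add hg1 hg2, add_le_add h1 h2⟩

lemma J1_eq (q : ℕ) :
    J1 k q = Ideal.span ((fun e => monomial e (1 : k)) '' {ev 2 0, ev 1 q, ev 0 (q + 1)}) := by
  rw [J1, Set.image_insert_eq, Set.image_insert_eq, Set.image_singleton]
  congr 1
  rw [monomial_ev, monomial_ev, monomial_ev]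
  simp

lemma J2_pow_eq (q b : ℕ) :
    J2 k q ^ b = Ideal.span ((fun e => monomial e (1 : k)) '' {ev 0 ((2 * q + 1) * b)}) := by
  rw [J2, Ideal.span_singleton_pow, Set.image_singleton]
  congr 1
  rw [monomial_ev, pow_mul]
  simp

lemma J1_pow_le (q a : ℕ) :
    J1 k q ^ a ≤ Ideal.span ((fun e => monomial e (1 : k)) '' Pset q a) := by
  induction a with
  | zero =>
    have h1 : (1 : MvPolynomial (Fin 2) k) ∈
        Ideal.span ((fun e => monomial e (1 : k)) '' Pset q 0) := by
      apply Ideal.subset_span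
      refine ⟨ev 0 0, ⟨0, 0, 0, by simp, by norm_num⟩, ?_⟩
      simp [monomial_ev]
    rw [pow_zero, Ideal.one_eq_top]
    exact le_of_eq ((Ideal.eq_top_iff_one _).2 h1).symm
  | succ a ih =>
    have hsub : Pset q a + ({ev 2 0, ev 1 q, ev 0 (q + 1)} : Set (Fin 2 →₀ ℕ)) ⊆
        Pset q (a + 1) := by
      rintro x hx
      obtain ⟨y, hy, z, hz, rfl⟩ := Set.mem_add.1 hx
      obtain ⟨c1, c2, c3, hsum, rfl⟩ := hy
      rcases hz with rfl | rfl | rfl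
      · exact ⟨c1 + 1, c2, c3, by omega, by rw [ev_add]; congr 1 <;> ring⟩
      · exact ⟨c1, c2 + 1, c3, by omega, by rw [ev_add]; congr 1 <;> ring⟩
      · exact ⟨c1, c2, c3 + 1, by omega, by rw [ev_add]; congr 1 <;> ring⟩
    calc J1 k q ^ (a + 1) = J1 k q ^ a * J1 k q := pow_succ _ _
      _ ≤ Ideal.span ((fun e => monomial e (1 : k)) '' Pset q a) *
            Ideal.span ((fun e => monomial e (1 : k)) '' {ev 2 0, ev 1 q, ev 0 (q + 1)}) :=
        Ideal.mul_mono ih (le_of_eq (J1_eq q))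
      _ ≤ Ideal.span ((fun e => monomial e (1 : k)) ''
            (Pset q a + {ev 2 0, ev 1 q, ev 0 (q + 1)})) := span_img_mul_span_img _ _
      _ ≤ Ideal.span ((fun e => monomial e (1 : k)) '' Pset q (a + 1)) :=
        Ideal.span_mono (Set.image_mono hsub)

lemma filtI_le_Mn (q n : ℕ) : filtI k q n ≤ Mn k q n := by
  rw [filtI]
  apply iSup_le
  rintro ⟨a, b⟩
  apply iSup_le
  intro hab
  have hsub : Pset q a + ({ev 0 ((2 * q + 1) * b)} : Set (Fin 2 →₀ ℕ)) ⊆ Sgen q n := by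
    rintro x hx
    obtain ⟨y, hy, z, hz, rfl⟩ := Set.mem_add.1 hx
    obtain ⟨c1, c2, c3, hsum, rfl⟩ := hy
    obtain rfl : z = ev 0 ((2 * q + 1) * b) := hz
    refine ⟨c1, c2, c3, b, by simp at hab; omega, ?_⟩
    rw [ev_add]
    congr 1 <;> ring
  calc J1 k q ^ a * J2 k q ^ b
      ≤ Ideal.span ((fun e => monomial e (1 : k)) '' Pset q a) *
          Ideal.span ((fun e => monomial e (1 : k)) '' {ev 0 ((2 * q + 1) * b)}) :=
        Ideal.mul_mono (J1_pow_le q a) (le_of_eq (J2_pow_eq q b))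
    _ ≤ Ideal.span ((fun e => monomial e (1 : k)) ''
          (Pset q a + {ev 0 ((2 * q + 1) * b)})) := span_img_mul_span_img _ _
    _ ≤ Ideal.span ((fun e => monomial e (1 : k)) '' Sgen q n) :=
        Ideal.span_mono (Set.image_mono hsub)
    _ = Mn k q n := (Mn_def q n).symm

lemma Mn_le_filtI (q n : ℕ) : Mn k q n ≤ filtI k q n := by
  rw [Mn_def, Ideal.span_le]
  rintro _ ⟨e, ⟨c1, c2, c3, b, hsum, rfl⟩, rfl⟩
  have key : (monomial (ev (2 * c1 + c2) (q * c2 + (q + 1) * c3 + (2 * q + 1) * b)) (1 : k))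
      = (X 0 ^ 2) ^ c1 * (X 0 * X 1 ^ q) ^ c2 * (X 1 ^ (q + 1)) ^ c3 *
        (X 1 ^ (2 * q + 1)) ^ b := by
    rw [monomial_ev]; ring
  beta_reduce
  rw [SetLike.mem_coe, key]
  have h1 : ((X 0 ^ 2 : MvPolynomial (Fin 2) k)) ^ c1 * (X 0 * X 1 ^ q) ^ c2 *
      (X 1 ^ (q + 1)) ^ c3 ∈ J1 k q ^ (c1 + c2 + c3) := by
    rw [pow_add, pow_add]
    exact Ideal.mul_mem_mul
      (Ideal.mul_mem_mul
        (Ideal.pow_mem_pow (Ideal.subset_span (by simp [Set.mem_insert_iff])) _)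
        (Ideal.pow_mem_pow (Ideal.subset_span (by simp [Set.mem_insert_iff])) _))
      (Ideal.pow_mem_pow (Ideal.subset_span (by simp [Set.mem_insert_iff])) _)
  have h2 : ((X 1 ^ (2 * q + 1) : MvPolynomial (Fin 2) k)) ^ b ∈ J2 k q ^ b := by
    refine Ideal.pow_mem_pow ?_ _
    rw [J2]
    exact Ideal.mem_span_singleton_self _
  have hmem := Ideal.mul_mem_mul h1 h2
  rw [filtI]
  refine Submodule.mem_iSup_of_mem (c1 + c2 + c3, b) ?_
  exact Submodule.mem_iSup_of_mem (by simpa using hsum) hmem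

/-- The combinatorial core. -/
lemma core {q n : ℕ} (hq : 1 ≤ q) (hn : 1 ≤ n) {c1 c2 c3 b s t : ℕ}
    (hsum : c1 + c2 + c3 + 2 * b = n) (hs : 2 * c1 + c2 ≤ s)
    (ht : q * c2 + (q + 1) * c3 + (2 * q + 1) * b ≤ t + q) :
    ∃ d1 d2 d3 b' : ℕ, d1 + d2 + d3 + 2 * b' = n - 1 ∧ 2 * d1 + d2 ≤ s ∧
      q * d2 + (q + 1) * d3 + (2 * q + 1) * b' ≤ t := by
  rcases Nat.eq_zero_or_pos c2 with hc2 | hc2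
  · rcases Nat.eq_zero_or_pos c3 with hc3 | hc3
    · rcases Nat.eq_zero_or_pos b with hb | hb
      · -- c2 = c3 = b = 0, so c1 = n ≥ 1
        obtain ⟨m, rfl⟩ : ∃ m, c1 = m + 1 := ⟨c1 - 1, by omega⟩
        exact ⟨m, 0, 0, 0, by omega, by omega, by simp⟩
      · -- b ≥ 1 : trade one x₃^{2q+1} for one x₃^{q+1}
        obtain ⟨m, rfl⟩ : ∃ m, b = m + 1 := ⟨b - 1, by omega⟩
        refine ⟨c1, c2, c3 + 1, m, by omega, hs, ?_⟩
        have h : (2 * q + 1) * (m + 1) = (2 * q + 1) * m + (2 * q + 1) := by ring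
        rw [h] at ht
        have h2 : (q + 1) * (c3 + 1) = (q + 1) * c3 + (q + 1) := by ring
        rw [h2]
        omega
    · -- c3 ≥ 1 : drop one x₃^{q+1}
      obtain ⟨m, rfl⟩ : ∃ m, c3 = m + 1 := ⟨c3 - 1, by omega⟩
      refine ⟨c1, c2, m, b, by omega, hs, ?_⟩
      have h : (q + 1) * (m + 1) = (q + 1) * m + (q + 1) := by ring
      rw [h] at ht
      omega
  · -- c2 ≥ 1 : drop one x₂x₃^q
    obtain ⟨m, rfl⟩ : ∃ m, c2 = m + 1 := ⟨c2 - 1, by omega⟩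
    refine ⟨c1, m, c3, b, by omega, by omega, ?_⟩
    have h : q * (m + 1) = q * m + q := by ring
    rw [h] at ht
    omega

/-- for all n ≥ 1, (Iₙ : x₃^q) ⊆ I_{n-1}. -/
theorem stmt_7 (q : ℕ) (hq : 1 ≤ q) (n : ℕ) (hn : 1 ≤ n) :
    (filtI k q n).colon ((Ideal.span {X 1 ^ q} : Ideal (MvPolynomial (Fin 2) k)) : Set (MvPolynomial (Fin 2) k)) ≤ filtI k q (n - 1) := by
  intro f hf
  rw [Ideal.mem_colon_span_singleton] at hf
  have hf' : f * X 1 ^ q ∈ Mn k q n := filtI_le_Mn q n hf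
  refine Mn_le_filtI q (n - 1) ?_
  rw [Mn_def, mem_ideal_span_monomial_image]
  intro e he
  have he' : e + Finsupp.single 1 q ∈ (f * X 1 ^ q).support := by
    rw [mem_support_iff, X_pow_eq_monomial, coeff_mul_monomial]
    simpa using mem_support_iff.1 he
  rw [Mn_def, mem_ideal_span_monomial_image] at hf'
  obtain ⟨g, hg, hle⟩ := hf' _ he'
  obtain ⟨c1, c2, c3, b, hsum, rfl⟩ := hg
  have h0 : 2 * c1 + c2 ≤ e 0 := by
    have := hle 0
    simpa [ev_apply0, Finsupp.single_apply] using this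
  have h1 : q * c2 + (q + 1) * c3 + (2 * q + 1) * b ≤ e 1 + q := by
    have := hle 1
    simpa [ev_apply1, Finsupp.single_apply] using this
  obtain ⟨d1, d2, d3, b', hsum', hs', ht'⟩ := core hq hn hsum h0 h1
  refine ⟨ev (2 * d1 + d2) (q * d2 + (q + 1) * d3 + (2 * q + 1) * b'),
    ⟨d1, d2, d3, b', hsum', rfl⟩, ?_⟩
  intro i
  fin_cases i
  · simpa [ev_apply0] using hs'
  · simpa [ev_apply1] using ht'
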